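/- Let $\hat\tau$ be a pattern with first entry $\hat\tau_1 = 1$, and let $\tau = 1 \oslash \hat\tau$ be the pattern $1(\hat\tau_1+1)(\hat\tau_2+1)\cdots(\hat\tau_m+1)$. A permutation $\sigma$ avoids $\tau$ if and only if the pattern of the subsequence of $\sigma$ obtained by deleting the left-to-right minima of $\sigma$ avoids $\hat\tau$. -/
import Mathlib


/-- Position `i` is a left-to-right minimum of the permutation `σ`. -/
def IsLRMin {N : ℕ} (σ : Equiv.Perm (Fin N)) (i : Fin N) : Prop :=
  ∀ t : Fin N, t < i → σ i < σ t

/-- `σ` contains the pattern `π`. -/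
def ContainsPattern {N k : ℕ} (σ : Equiv.Perm (Fin N)) (π : Equiv.Perm (Fin k)) : Prop :=
  ∃ f : Fin k → Fin N, StrictMono f ∧ ∀ i j : Fin k, π i < π j ↔ σ (f i) < σ (f j)

/-- Let `τ̂ ∈ S_{m+1}` with first entry `1`, and `τ = 1 ⊘ τ̂ ∈ S_{m+2}`.
Then `σ` avoids `τ` iff the pattern of the subsequence of `σ` obtained by
deleting the left-to-right minima avoids `τ̂`. -/
theorem avoids_oslash_iff {N m : ℕ} (τhat : Equiv.Perm (Fin (m + 1)))
    (hτhat1 : τhat 0 = 0)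
    (τ : Equiv.Perm (Fin (m + 2)))
    (hτ0 : τ 0 = 0) (hτsucc : ∀ i : Fin (m + 1), τ i.succ = (τhat i).succ)
    (σ : Equiv.Perm (Fin N)) :
    ¬ContainsPattern σ τ ↔
      ¬∃ f : Fin (m + 1) → Fin N, StrictMono f ∧ (∀ i, ¬IsLRMin σ (f i)) ∧
        ∀ i j : Fin (m + 1), τhat i < τhat j ↔ σ (f i) < σ (f j) := by
  apply not_congr
  constructor
  · rintro ⟨g, hg, hpat⟩
    refine ⟨fun i => g i.succ, fun i j hij => hg (Fin.succ_lt_succ_iff.mpr hij), ?_, ?_⟩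
    · intro i hmin
      have h1 : σ (g 0) < σ (g i.succ) := by
        rw [← hpat]
        rw [hτ0, hτsucc]
        exact Fin.succ_pos _
      have h2 : g 0 < g i.succ := hg (Fin.succ_pos i)
      exact absurd (hmin (g 0) h2) (not_lt.mpr h1.le)
    · intro i j
      rw [← hpat, hτsucc, hτsucc, Fin.succ_lt_succ_iff]
  · rintro ⟨f, hf, hnm, hpat⟩
    obtain ⟨t, ht, hst⟩ := by
      have := hnm 0
      simp only [IsLRMin, not_forall, not_lt] at this
      exact this
    have htne : σ t ≠ σ (f 0) := fun h => by
      have := σ.injective h; exact absurd this (ne_of_lt ht)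
    have htlt : σ t < σ (f 0) := lt_of_le_of_ne hst htne
    have hmin : ∀ j, σ t < σ (f j) := by
      intro j
      rcases eq_or_ne j 0 with rfl | hj
      · exact htlt
      · refine htlt.trans ((hpat 0 j).mp ?_)
        rw [hτhat1]
        exact Fin.pos_iff_ne_zero.mpr fun h => hj (τhat.injective (h.trans hτhat1.symm))
    refine ⟨fun i => Fin.cases t f i, ?_, ?_⟩
    · intro i j hij
      induction i using Fin.cases with
      | zero =>
        induction j using Fin.cases with
        | zero => exact absurd hij (lt_irrefl _)
        | succ j => exact ht.trans_le (hf.monotone (Fin.zero_le j))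
      | succ i =>
        induction j using Fin.cases with
        | zero => exact absurd hij (not_lt.mpr (Fin.zero_le _))
        | succ j => exact hf (Fin.succ_lt_succ_iff.mp hij)
    · intro i j
      induction i using Fin.cases with
      | zero =>
        induction j using Fin.cases with
        | zero => simp
        | succ j =>
          simp only [Fin.cases_zero, Fin.cases_succ, hτ0, hτsucc]
          exact ⟨fun _ => hmin j, fun _ => Fin.succ_pos _⟩
      | succ i =>
        induction j using Fin.cases with
        | zero =>
          simp only [Fin.cases_zero, Fin.cases_succ, hτ0, hτsucc]
          constructor
          · intro h; exact absurd h (Fin.not_lt_zero _)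
          · intro h; exact absurd h (not_lt.mpr (hmin i).le)
        | succ j =>
          simp only [Fin.cases_succ, hτsucc, Fin.succ_lt_succ_iff]
          exact hpat i j
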